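/- Dynamic-programming correctness at internal nodes: with S[v,A',ℓ] defined as the maximum diversity d(P) over all (v,A',ℓ)-compatible sets P ⊆ Z_v (or −∞ if none exists), for an internal node v of T with children w₁,…,w_t one has S[v,A',ℓ] = max over P₀ ∈ 𝒫₀(A') and nonnegative integers ℓ₁,…,ℓ_t with |P₀| + Σᵢ ℓᵢ = ℓ of d(P₀) + Σᵢ S[wᵢ, A_{wᵢ} ∩ (A' ∪ P₀), ℓᵢ], where 𝒫₀(A') = {∅, {v}} if v is a source of F or γ_v(A') ≥ 1, and 𝒫₀(A') = {∅} otherwise. -/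

import Mathlib

/-- A rooted tree on the vertex set `V`, given by its root and parent function
(the parent of the root is the root itself, and every vertex reaches the root by
iterating the parent function). -/
structure RTree (V : Type*) where
  root : V
  parent : V → V
  parent_root : parent root = root
  reach : ∀ v, ∃ n, parent^[n] v = root

namespace RTree

variable {V : Type*}

/-- `u` is an ancestor of `v` (possibly `u = v`). -/
def anc (T : RTree V) (u v : V) : Prop := ∃ n, T.parent^[n] v = u

/-- `u` is a proper ancestor of `v`. -/
def panc (T : RTree V) (u v : V) : Prop := T.anc u v ∧ u ≠ v

/-- The set of descendants of `v` in `T`, including `v` itself. -/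
def Z (T : RTree V) (v : V) : Set V := {w | T.anc v w}

end RTree

/-- The set of in-neighbours (prey) of `w` in the directed graph `F`. -/
def inN {V : Type*} (F : V → V → Prop) (w : V) : Set V := {u | F u w}

/-- `F` is a DAG. -/
def Acyclic {V : Type*} (F : V → V → Prop) : Prop := ∀ v, ¬ Relation.TransGen F v v

/-- `T` is a tree extension of the DAG `F`: for every arc `(u,v)` of `F`, `u` is a
proper ancestor of `v` in `T`. -/
def IsTreeExt {V : Type*} (F : V → V → Prop) (T : RTree V) : Prop :=
  ∀ u v, F u v → T.panc u v

/-- `A_v`: the set of proper ancestors of `v` in `T` that have an out-neighbour in `F`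
among the descendants of `v` in `T`. -/
def Aset {V : Type*} (F : V → V → Prop) (T : RTree V) (v : V) : Set V :=
  {a | T.panc a v ∧ ∃ w, F a w ∧ w ∈ T.Z v}

/-- `γ_w(S)`: the total weight of arcs `(u,w)` of `F` with `u ∈ S`. -/
noncomputable def gam {V : Type*} (F : V → V → Prop) (γ : V → V → ℝ) (w : V)
    (S : Set V) : ℝ :=
  ∑ᶠ u ∈ S ∩ inN F w, γ u w

/-- `P ⊆ Z_v` is `(v,A',ℓ)`-compatible: `|P| = ℓ` and every `w ∈ P` is a source of `F`
or satisfies `γ_w(P ∪ A') ≥ 1`. -/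
def Compat {V : Type*} (F : V → V → Prop) (γ : V → V → ℝ) (T : RTree V) (v : V)
    (A' : Set V) (ℓ : ℕ) (P : Set V) : Prop :=
  P ⊆ T.Z v ∧ P.ncard = ℓ ∧ ∀ w ∈ P, inN F w = ∅ ∨ 1 ≤ gam F γ w (P ∪ A')

/-- The total diversity of `P`. -/
noncomputable def dsum {V : Type*} (d : V → ℕ) (P : Set V) : ℕ := ∑ᶠ u ∈ P, d u

/-- The dynamic-programming table entry `S[v,A',ℓ]`: the maximum diversity `d(P)` over
all `(v,A',ℓ)`-compatible sets `P ⊆ Z_v`, or `⊥ = −∞` if none exists. -/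
noncomputable def Sval {V : Type*} (F : V → V → Prop) (γ : V → V → ℝ) (d : V → ℕ)
    (T : RTree V) (v : V) (A' : Set V) (ℓ : ℕ) : EReal :=
  sSup {x : EReal | ∃ P : Set V, Compat F γ T v A' ℓ P ∧ x = (dsum d P : ℕ)}

namespace RTree

variable {V : Type*} {T : RTree V} {u u' v x c c' : V}

theorem anc_rfl (T : RTree V) (v : V) : T.anc v v := ⟨0, rfl⟩

theorem anc_trans' (h1 : T.anc u v) (h2 : T.anc v x) : T.anc u x := by
  obtain ⟨n, hn⟩ := h1; obtain ⟨m, hm⟩ := h2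
  exact ⟨n + m, by rw [Function.iterate_add_apply, hm, hn]⟩

theorem eq_root_of_fix (T : RTree V) (h : T.parent x = x) : x = T.root := by
  obtain ⟨n, hn⟩ := T.reach x
  rwa [Function.iterate_fixed h n] at hn

theorem anc_antisymm (h1 : T.anc u v) (h2 : T.anc v u) : u = v := by
  obtain ⟨n, hn⟩ := h1; obtain ⟨m, hm⟩ := h2
  rcases Nat.eq_zero_or_pos n with h0 | hpos
  · rw [h0, Function.iterate_zero_apply] at hn; exact hn.symm
  · have hper : T.parent^[m + n] v = v := by
      rw [Function.iterate_add_apply, hn, hm]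
    have hper' : ∀ q, T.parent^[(m + n) * q] v = v := by
      intro q; induction q with
      | zero => simp
      | succ k ih => rw [Nat.mul_succ, Function.iterate_add_apply, hper, ih]
    obtain ⟨k, hk⟩ := T.reach v
    have hle : k ≤ (m + n) * (k + 1) := by nlinarith
    have hv : v = T.root := by
      have h2' := hper' (k + 1)
      rw [(by omega : (m + n) * (k + 1) = ((m + n) * (k + 1) - k) + k),
        Function.iterate_add_apply, hk, Function.iterate_fixed T.parent_root] at h2'
      exact h2'.symm
    have hu : u = T.root := by
      rw [hv, Function.iterate_fixed T.parent_root] at hn; exact hn.symm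
    rw [hu, hv]

theorem anc_parent (T : RTree V) (c : V) : T.anc (T.parent c) c := ⟨1, by simp⟩

theorem not_mem_Z_of_panc (h : T.panc u v) : u ∉ T.Z v :=
  fun hu => h.2 (anc_antisymm h.1 hu)

theorem child_not_root_ne (hc : T.parent c = v) (hcr : c ≠ T.root) : c ≠ v := by
  intro h; exact hcr (eq_root_of_fix T (by rw [hc, h]))

theorem not_mem_Z_child (hc : T.parent c = v) (hcr : c ≠ T.root) : v ∉ T.Z c := by
  intro hv
  exact child_not_root_ne hc hcr (anc_antisymm hv ⟨1, by simpa using hc⟩)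

theorem anc_comparable (h1 : T.anc u x) (h2 : T.anc u' x) : T.anc u u' ∨ T.anc u' u := by
  obtain ⟨n, hn⟩ := h1; obtain ⟨m, hm⟩ := h2
  rcases le_total n m with h | h
  · right
    exact ⟨m - n, by rw [← hn, ← Function.iterate_add_apply, Nat.sub_add_cancel h, hm]⟩
  · left
    exact ⟨n - m, by rw [← hm, ← Function.iterate_add_apply, Nat.sub_add_cancel h, hn]⟩

theorem exists_child (hvx : T.anc v x) (hne : x ≠ v) :
    ∃ c, T.parent c = v ∧ c ≠ T.root ∧ T.anc c x := by
  classical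
  have hex : ∃ n, T.parent^[n] x = v := hvx
  have hN : T.parent^[Nat.find hex] x = v := Nat.find_spec hex
  have hN0 : Nat.find hex ≠ 0 := by
    intro h; apply hne; rw [h, Function.iterate_zero_apply] at hN; exact hN
  have hpar : T.parent (T.parent^[Nat.find hex - 1] x) = v := by
    rw [(by omega : Nat.find hex = Nat.find hex - 1 + 1), Function.iterate_succ_apply'] at hN
    exact hN
  refine ⟨T.parent^[Nat.find hex - 1] x, hpar, ?_, ⟨Nat.find hex - 1, rfl⟩⟩
  intro hroot
  have hvr : v = T.root := by rw [← hpar, hroot, T.parent_root]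
  have hlt : T.parent^[Nat.find hex - 1] x = v := by rw [hroot, hvr]
  exact Nat.find_min hex (by omega) hlt

theorem not_anc_sibling (hc : T.parent c = v) (hcr : c ≠ T.root)
    (hc' : T.parent c' = v) (hne : c ≠ c') : ¬ T.anc c c' := by
  rintro ⟨k, hk⟩
  have hk0 : k ≠ 0 := by
    intro h; rw [h, Function.iterate_zero_apply] at hk; exact hne hk.symm
  have hkv : T.parent^[k - 1] v = c := by
    rw [(by omega : k = k - 1 + 1), Function.iterate_succ_apply, hc'] at hk
    exact hk
  have hcv : c = v := anc_antisymm ⟨k - 1, hkv⟩ ⟨1, by simpa using hc⟩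
  exact child_not_root_ne hc hcr hcv

theorem disjoint_Z_sibling (hc : T.parent c = v) (hcr : c ≠ T.root)
    (hc' : T.parent c' = v) (hcr' : c' ≠ T.root) (hne : c ≠ c') :
    Disjoint (T.Z c) (T.Z c') := by
  rw [Set.disjoint_left]; intro x hx hx'
  rcases anc_comparable hx hx' with h | h
  · exact not_anc_sibling hc hcr hc' hne h
  · exact not_anc_sibling hc' hcr' hc hne.symm h

theorem panc_of_anc_not_mem_Z (hcx : T.anc c x) (hux : T.anc u x) (hu : u ∉ T.Z c) :
    T.panc u c := by
  rcases anc_comparable hux hcx with h | h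
  · exact ⟨h, fun he => hu (he ▸ anc_rfl T c)⟩
  · exact absurd h hu

theorem eq_parent_of_panc_child_of_mem_Z (hc : T.parent c = v) (h : T.panc u c)
    (hu : u ∈ T.Z v) : u = v := by
  obtain ⟨⟨k, hk⟩, hne⟩ := h
  have hk0 : k ≠ 0 := by
    intro h0; rw [h0, Function.iterate_zero_apply] at hk; exact hne hk.symm
  have hkv : T.parent^[k - 1] v = u := by
    rw [(by omega : k = k - 1 + 1), Function.iterate_succ_apply, hc] at hk
    exact hk
  exact anc_antisymm ⟨k - 1, hkv⟩ hu

end RTree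

section helpers2

open Function

theorem dsum_decomp {V : Type*} [Finite V] (d : V → ℕ) (P0 : Set V) {t : ℕ}
    (Pj : Fin t → Set V) (h0 : ∀ i, Disjoint P0 (Pj i))
    (hij : Pairwise (Disjoint on Pj)) :
    dsum d (P0 ∪ ⋃ i, Pj i) = dsum d P0 + ∑ i, dsum d (Pj i) := by
  unfold dsum
  rw [finsum_mem_union (Set.disjoint_iUnion_right.mpr h0) (Set.toFinite _) (Set.toFinite _),
    finsum_mem_iUnion hij (fun i => Set.toFinite _)]
  congr 1
  exact finsum_eq_sum_of_fintype _

theorem ncard_eq_dsum_one {V : Type*} [Finite V] (s : Set V) :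
    s.ncard = dsum (fun _ => 1) s := by
  unfold dsum
  rw [← Set.Finite.coe_toFinset (Set.toFinite s), finsum_mem_coe_finset,
    Set.ncard_coe_finset]
  simp

theorem ncard_decomp {V : Type*} [Finite V] (P0 : Set V) {t : ℕ}
    (Pj : Fin t → Set V) (h0 : ∀ i, Disjoint P0 (Pj i))
    (hij : Pairwise (Disjoint on Pj)) :
    (P0 ∪ ⋃ i, Pj i).ncard = P0.ncard + ∑ i, (Pj i).ncard := by
  rw [ncard_eq_dsum_one, dsum_decomp _ _ _ h0 hij, ← ncard_eq_dsum_one]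
  congr 1
  exact Finset.sum_congr rfl fun i _ => (ncard_eq_dsum_one _).symm

theorem gam_congr {V : Type*} (F : V → V → Prop) (γ : V → V → ℝ) (w : V) {S S' : Set V}
    (h : S ∩ inN F w = S' ∩ inN F w) : gam F γ w S = gam F γ w S' := by
  unfold gam; rw [h]

section key
variable {V : Type*} {F : V → V → Prop} {T : RTree V} {v : V} {t : ℕ} {w : Fin t → V}
  {A' P0 : Set V} {Pj : Fin t → Set V}

theorem inN_decomp (hT : IsTreeExt F T)
    (hchild : ∀ i, T.parent (w i) = v ∧ w i ≠ T.root) (hinj : Function.Injective w)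
    (hA' : A' ⊆ Aset F T v) (hP0 : P0 ⊆ {v}) (hPj : ∀ j, Pj j ⊆ T.Z (w j))
    (i : Fin t) (x : V) (hx : x ∈ Pj i) :
    ((P0 ∪ ⋃ j, Pj j) ∪ A') ∩ inN F x
      = (Pj i ∪ Aset F T (w i) ∩ (A' ∪ P0)) ∩ inN F x := by
  have hxZ : x ∈ T.Z (w i) := hPj i hx
  ext u
  simp only [Set.mem_inter_iff, Set.mem_union, Set.mem_iUnion, inN, Set.mem_setOf_eq,
    Aset]
  constructor
  · rintro ⟨hu, hFux⟩
    refine ⟨?_, hFux⟩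
    have hpancux : T.panc u x := hT u x hFux
    rcases hu with (h0 | ⟨j, hj⟩) | hA
    · have huv : u = v := hP0 h0
      subst huv
      right
      exact ⟨⟨RTree.panc_of_anc_not_mem_Z hxZ hpancux.1
        (RTree.not_mem_Z_child (hchild i).1 (hchild i).2), x, hFux, hxZ⟩, Or.inr h0⟩
    · by_cases hji : j = i
      · subst hji; exact Or.inl hj
      · exfalso
        have hZj : u ∈ T.Z (w j) := hPj j hj
        have hwij : w i ≠ w j := fun he => hji ((hinj he).symm)
        have hunotZi : u ∉ T.Z (w i) := fun hcon =>
          Set.disjoint_left.mp (RTree.disjoint_Z_sibling (hchild i).1 (hchild i).2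
            (hchild j).1 (hchild j).2 hwij) hcon hZj
        have hpanc_uwi : T.panc u (w i) :=
          RTree.panc_of_anc_not_mem_Z hxZ hpancux.1 hunotZi
        have huZv : u ∈ T.Z v :=
          RTree.anc_trans' ⟨1, by simpa using (hchild j).1⟩ hZj
        have huv : u = v :=
          RTree.eq_parent_of_panc_child_of_mem_Z (hchild i).1 hpanc_uwi huZv
        exact RTree.not_mem_Z_child (hchild j).1 (hchild j).2 (huv ▸ hZj)
    · have hpuv := (hA' hA).1
      have hunotZ : u ∉ T.Z (w i) := fun hcon =>
        RTree.not_mem_Z_of_panc hpuv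
          (RTree.anc_trans' ⟨1, by simpa using (hchild i).1⟩ hcon)
      right
      exact ⟨⟨RTree.panc_of_anc_not_mem_Z hxZ hpancux.1 hunotZ, x, hFux, hxZ⟩, Or.inl hA⟩
  · rintro ⟨hu, hFux⟩
    refine ⟨?_, hFux⟩
    rcases hu with h | ⟨_, (h | h)⟩
    · exact Or.inl (Or.inr ⟨i, h⟩)
    · exact Or.inr h
    · exact Or.inl (Or.inl h)

theorem inN_v_eq (hT : IsTreeExt F T)
    (hchild : ∀ i, T.parent (w i) = v ∧ w i ≠ T.root)
    (hP0 : P0 ⊆ {v}) (hPj : ∀ j, Pj j ⊆ T.Z (w j)) :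
    ((P0 ∪ ⋃ j, Pj j) ∪ A') ∩ inN F v = A' ∩ inN F v := by
  ext u
  simp only [Set.mem_inter_iff, Set.mem_union, Set.mem_iUnion, inN, Set.mem_setOf_eq]
  constructor
  · rintro ⟨hu, hFuv⟩
    refine ⟨?_, hFuv⟩
    have hpanc := hT u v hFuv
    rcases hu with (h0 | ⟨j, hj⟩) | hA
    · exact absurd (hP0 h0) hpanc.2
    · exfalso
      have hZj := hPj j hj
      have h1 : T.anc (w j) v := RTree.anc_trans' hZj hpanc.1
      have h2 := RTree.anc_antisymm h1 ⟨1, by simpa using (hchild j).1⟩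
      exact RTree.child_not_root_ne (hchild j).1 (hchild j).2 h2
    · exact hA
  · rintro ⟨hu, hFuv⟩; exact ⟨Or.inr hu, hFuv⟩

end key
end helpers2

/-- Dynamic-programming correctness at internal nodes: for an internal node
`v` of `T` with children `w 0, …, w (t-1)`,
`S[v,A',ℓ] = max over P₀ ∈ 𝒫₀(A') and ℓ₁,…,ℓ_t ≥ 0 with |P₀| + Σᵢ ℓᵢ = ℓ of
d(P₀) + Σᵢ S[wᵢ, A_{wᵢ} ∩ (A' ∪ P₀), ℓᵢ]`, where `𝒫₀(A') = {∅, {v}}` if `v` is a source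
of `F` or `γ_v(A') ≥ 1`, and `𝒫₀(A') = {∅}` otherwise. -/
theorem stmt_18 {V : Type} [Fintype V] (F : V → V → Prop) (hacyc : Acyclic F)
    (γ : V → V → ℝ) (hγ : ∀ u v, F u v → 0 < γ u v ∧ γ u v ≤ 1)
    (d : V → ℕ) (hd : ∀ v, 1 ≤ d v)
    (T : RTree V) (hT : IsTreeExt F T)
    (v : V) (t : ℕ) (hinternal : 1 ≤ t) (w : Fin t → V)
    (hchild : ∀ i, T.parent (w i) = v ∧ w i ≠ T.root)
    (hinj : Function.Injective w)
    (hall : ∀ u, T.parent u = v → u ≠ T.root → ∃ i, w i = u)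
    (A' : Set V) (hA' : A' ⊆ Aset F T v) (ℓ : ℕ) :
    Sval F γ d T v A' ℓ =
      sSup {x : EReal | ∃ (P₀ : Set V) (ls : Fin t → ℕ),
        (P₀ = ∅ ∨ (P₀ = {v} ∧ (inN F v = ∅ ∨ 1 ≤ gam F γ v A'))) ∧
        P₀.ncard + ∑ i, ls i = ℓ ∧
        x = (dsum d P₀ : ℕ) +
          ∑ i, Sval F γ d T (w i) (Aset F T (w i) ∩ (A' ∪ P₀)) (ls i)} := by
  classical
  apply le_antisymm
  · -- LHS ≤ RHS
    refine sSup_le ?_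
    rintro x ⟨P, ⟨hPZ, hPcard, hPcomp⟩, rfl⟩
    set P0 : Set V := P ∩ {v} with hP0def
    set Pj : Fin t → Set V := fun i => P ∩ T.Z (w i) with hPjdef
    have hP0sub : P0 ⊆ {v} := Set.inter_subset_right
    have hPjsub : ∀ j, Pj j ⊆ T.Z (w j) := fun j => Set.inter_subset_right
    have hdecomp : P = P0 ∪ ⋃ i, Pj i := by
      ext y; constructor
      · intro hy
        by_cases hyv : y = v
        · exact Or.inl ⟨hy, hyv⟩
        · obtain ⟨c, hc, hcr, hcy⟩ := RTree.exists_child (hPZ hy) hyv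
          obtain ⟨i, hi⟩ := hall c hc hcr
          exact Or.inr (Set.mem_iUnion.mpr ⟨i, hy, hi ▸ hcy⟩)
      · rintro (h | h)
        · exact h.1
        · obtain ⟨i, hi⟩ := Set.mem_iUnion.mp h; exact hi.1
    have hdisj0 : ∀ i, Disjoint P0 (Pj i) := by
      intro i
      rw [Set.disjoint_left]
      intro a ha hb
      have hav : a = v := hP0sub ha
      subst hav
      exact RTree.not_mem_Z_child (hchild i).1 (hchild i).2 hb.2
    have hdisjij : Pairwise (Function.onFun Disjoint Pj) := by
      intro i j hij
      exact Set.disjoint_left.mpr fun a ha hb =>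
        Set.disjoint_left.mp (RTree.disjoint_Z_sibling (hchild i).1 (hchild i).2
          (hchild j).1 (hchild j).2 (fun he => hij (hinj he))) ha.2 hb.2
    have hcards : P0.ncard + ∑ i, (Pj i).ncard = ℓ := by
      rw [← ncard_decomp P0 Pj hdisj0 hdisjij, ← hdecomp, hPcard]
    have hcompat : ∀ i, Compat F γ T (w i) (Aset F T (w i) ∩ (A' ∪ P0))
        ((Pj i).ncard) (Pj i) := by
      intro i
      refine ⟨hPjsub i, rfl, ?_⟩
      intro y hy
      rcases hPcomp y hy.1 with h | h
      · exact Or.inl h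
      · right
        have heq := inN_decomp hT hchild hinj hA' hP0sub hPjsub i y hy
        rw [← hdecomp] at heq
        rwa [gam_congr F γ y heq] at h
    have hP0cond : P0 = ∅ ∨ (P0 = {v} ∧ (inN F v = ∅ ∨ 1 ≤ gam F γ v A')) := by
      by_cases hv : v ∈ P
      · right
        have hP0v : P0 = {v} := by
          ext z
          simp only [hP0def, Set.mem_inter_iff, Set.mem_singleton_iff]
          exact ⟨fun h => h.2, fun h => ⟨h ▸ hv, h⟩⟩
        refine ⟨hP0v, ?_⟩
        rcases hPcomp v hv with h | h
        · exact Or.inl h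
        · right
          have heq := inN_v_eq (A' := A') hT hchild hP0sub hPjsub
          rw [← hdecomp] at heq
          rwa [gam_congr F γ v heq] at h
      · left
        ext z
        simp only [hP0def, Set.mem_inter_iff, Set.mem_singleton_iff, Set.mem_empty_iff_false,
          iff_false, not_and]
        intro hz hzv
        exact hv (hzv ▸ hz)
    refine le_trans ?_ (le_sSup ⟨P0, fun i => (Pj i).ncard, hP0cond, hcards, rfl⟩)
    have hds : dsum d P = dsum d P0 + ∑ i, dsum d (Pj i) := by
      rw [hdecomp] at hPZ ⊢ -- dummy to rewrite LHS
      exact dsum_decomp d P0 Pj hdisj0 hdisjij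
    rw [hds]
    push_cast
    refine add_le_add (le_refl _) ?_
    refine Finset.sum_le_sum fun i _ => ?_
    exact le_sSup ⟨Pj i, hcompat i, rfl⟩
  · -- RHS ≤ LHS
    refine sSup_le ?_
    rintro x ⟨P0, ls, hP0cond, hcardsum, rfl⟩
    by_cases hne : ∀ i, Set.Nonempty {x : EReal | ∃ P, Compat F γ T (w i)
        (Aset F T (w i) ∩ (A' ∪ P0)) (ls i) P ∧ x = ((dsum d P : ℕ) : EReal)}
    · -- all tables nonempty: suprema attained
      have hmem : ∀ i, ∃ P, Compat F γ T (w i) (Aset F T (w i) ∩ (A' ∪ P0)) (ls i) P ∧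
          Sval F γ d T (w i) (Aset F T (w i) ∩ (A' ∪ P0)) (ls i)
            = ((dsum d P : ℕ) : EReal) := by
        intro i
        have hfin : Set.Finite {x : EReal | ∃ P, Compat F γ T (w i)
            (Aset F T (w i) ∩ (A' ∪ P0)) (ls i) P ∧ x = ((dsum d P : ℕ) : EReal)} := by
          refine Set.Finite.subset (Set.Finite.image
            (fun P : Set V => ((dsum d P : ℕ) : EReal)) Set.finite_univ) ?_
          rintro y ⟨P, _, rfl⟩
          exact ⟨P, trivial, rfl⟩
        exact Set.Nonempty.csSup_mem (hne i) hfin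
      choose Pc hPcompat hPval using hmem
      have hP0sub : P0 ⊆ {v} := by
        rcases hP0cond with h | ⟨h, _⟩ <;> simp [h]
      have hPjsub : ∀ j, Pc j ⊆ T.Z (w j) := fun j => (hPcompat j).1
      have hdisj0 : ∀ i, Disjoint P0 (Pc i) := by
        intro i
        rw [Set.disjoint_left]
        intro a ha hb
        have hav : a = v := hP0sub ha
        subst hav
        exact RTree.not_mem_Z_child (hchild i).1 (hchild i).2 (hPjsub i hb)
      have hdisjij : Pairwise (Function.onFun Disjoint Pc) := by
        intro i j hij
        exact Set.disjoint_left.mpr fun a ha hb =>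
          Set.disjoint_left.mp (RTree.disjoint_Z_sibling (hchild i).1 (hchild i).2
            (hchild j).1 (hchild j).2 (fun he => hij (hinj he)))
            (hPjsub i ha) (hPjsub j hb)
      have hPcompatV : Compat F γ T v A' ℓ (P0 ∪ ⋃ i, Pc i) := by
        refine ⟨?_, ?_, ?_⟩
        · rintro y (h | h)
          · have hyv : y = v := hP0sub h
            exact hyv ▸ RTree.anc_rfl T v
          · obtain ⟨i, hi⟩ := Set.mem_iUnion.mp h
            exact RTree.anc_trans' ⟨1, by simpa using (hchild i).1⟩ (hPjsub i hi)
        · rw [ncard_decomp P0 Pc hdisj0 hdisjij, ← hcardsum]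
          congr 1
          exact Finset.sum_congr rfl fun i _ => (hPcompat i).2.1
        · intro y hy
          rcases hy with h0 | hj
          · have hyv : y = v := hP0sub h0
            subst hyv
            rcases hP0cond with h | ⟨_, hcond⟩
            · rw [h] at h0; exact absurd h0 (Set.notMem_empty _)
            rcases hcond with h | h
            · exact Or.inl h
            · right
              have heq := inN_v_eq (A' := A') hT hchild hP0sub hPjsub
              rw [gam_congr F γ y heq]
              exact h
          · obtain ⟨i, hi⟩ := Set.mem_iUnion.mp hj
            rcases (hPcompat i).2.2 y hi with h | h
            · exact Or.inl h
            · right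
              have heq := inN_decomp hT hchild hinj hA' hP0sub hPjsub i y hi
              rw [gam_congr F γ y heq]
              exact h
      refine le_sSup ⟨P0 ∪ ⋃ i, Pc i, hPcompatV, ?_⟩
      rw [dsum_decomp d P0 Pc hdisj0 hdisjij]
      push_cast
      congr 1
      exact Finset.sum_congr rfl fun i _ => hPval i
    · -- some table empty: value is ⊥
      push_neg at hne
      obtain ⟨i, hi⟩ := hne
      have hbot : Sval F γ d T (w i) (Aset F T (w i) ∩ (A' ∪ P0)) (ls i) = ⊥ := by
        rw [Sval, hi, sSup_empty]
      have hsum : ∑ i, Sval F γ d T (w i) (Aset F T (w i) ∩ (A' ∪ P0)) (ls i)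
          = (⊥ : EReal) := by
        rw [← Finset.add_sum_erase _ _ (Finset.mem_univ i), hbot, EReal.bot_add]
      rw [hsum, EReal.add_bot]
      exact bot_le
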